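/- For every λ ∈ k with λ ≠ 0, the endomorphism algebra End_{Λ_e}(B(1,λ)) is two-dimensional over k, spanned by the identity and the endomorphism τ (where τ(c_e) = c_{e+1} and τ vanishes on all other standard basis vectors), and is isomorphic as a k-algebra to k[X]/(X²). -/

import Mathlib

/-! Common framework: representations of the quiver Q_e / modules over the
generalized Brauer star algebra Λ_e, encoded as a module `V` together with
endomorphisms `v i` (images of the vertex idempotents), `a i` (images of the
arrows; `a i` is the arrow leaving vertex `i`, with `a ⟨e-1⟩` the arrow
`α_e : e → 1`) and `d` (image of the loop `δ`). -/

namespace GBTA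

structure PreRep (R : Type) [CommRing R] (e : ℕ) : Type 1 where
  V : Type
  [instAdd : AddCommGroup V]
  [instMod : Module R V]
  v : Fin e → Module.End R V
  a : Fin e → Module.End R V
  d : Module.End R V

attribute [instance] PreRep.instAdd PreRep.instMod

variable {R : Type} [CommRing R] {e : ℕ}

/-- The (0-based) index of the vertex `e`. -/
def ve (e : ℕ) [NeZero e] : Fin e :=
  ⟨e - 1, by have := Nat.pos_of_ne_zero (NeZero.ne e); omega⟩

/-- The (0-based) index of the vertex `e - 1`. -/
def vem (e : ℕ) [NeZero e] : Fin e :=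
  ⟨e - 2, by have := Nat.pos_of_ne_zero (NeZero.ne e); omega⟩

/-- The cycle `C_i`: the composite of the `e` cyclically consecutive arrows
starting with the arrow leaving vertex `i` (composites written right to left). -/
def cyc [NeZero e] (ρ : PreRep R e) (i : Fin e) : Module.End R ρ.V :=
  (((List.range e).reverse).map fun l => ρ.a (i + (⟨l % e, Nat.mod_lt _ (Nat.pos_of_ne_zero (NeZero.ne e))⟩ : Fin e))).prod

/-- The defining relations of the generalized Brauer star algebra `Λ_e`. -/
def Satisfies [NeZero e] (ρ : PreRep R e) : Prop :=
  (∀ i j : Fin e, i ≠ j → ρ.v i * ρ.v j = 0) ∧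
  (∀ i : Fin e, ρ.v i * ρ.v i = ρ.v i) ∧
  ((∑ i : Fin e, ρ.v i) = 1) ∧
  (∀ i : Fin e, ρ.a i = ρ.v (i + 1) * ρ.a i * ρ.v i) ∧
  (ρ.d = ρ.v (ve e) * ρ.d * ρ.v (ve e)) ∧
  (ρ.d * ρ.a (vem e) = 0) ∧
  (ρ.a (ve e) * ρ.d = 0) ∧
  (ρ.d * ρ.d = cyc ρ (ve e) * cyc ρ (ve e)) ∧
  (∀ i : Fin e, i ≠ ve e → ρ.a i * (cyc ρ i * cyc ρ i) = 0)

/-- The space of `Λ_e`-module homomorphisms `ρ → σ`: linear maps commuting with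
all the structure maps. -/
def homSet (ρ σ : PreRep R e) : Submodule R (ρ.V →ₗ[R] σ.V) where
  carrier := {f | (∀ i, f ∘ₗ ρ.v i = σ.v i ∘ₗ f) ∧ (∀ i, f ∘ₗ ρ.a i = σ.a i ∘ₗ f) ∧
    f ∘ₗ ρ.d = σ.d ∘ₗ f}
  add_mem' := by
    rintro f g ⟨hfv, hfa, hfd⟩ ⟨hgv, hga, hgd⟩
    exact ⟨fun i => by simp only [LinearMap.add_comp, LinearMap.comp_add, hfv i, hgv i],
      fun i => by simp only [LinearMap.add_comp, LinearMap.comp_add, hfa i, hga i],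
      by simp only [LinearMap.add_comp, LinearMap.comp_add, hfd, hgd]⟩
  zero_mem' := ⟨fun i => by simp, fun i => by simp, by simp⟩
  smul_mem' := by
    rintro c f ⟨hfv, hfa, hfd⟩
    exact ⟨fun i => by simp only [LinearMap.smul_comp, LinearMap.comp_smul, hfv i],
      fun i => by simp only [LinearMap.smul_comp, LinearMap.comp_smul, hfa i],
      by simp only [LinearMap.smul_comp, LinearMap.comp_smul, hfd]⟩

/-- Projectivity of a `Λ_e`-module, via the lifting property in the category of
`Λ_e`-modules. -/
def IsProjective [NeZero e] (P : PreRep R e) : Prop :=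
  Satisfies P ∧
  ∀ (A B : PreRep R e), Satisfies A → Satisfies B →
    ∀ p ∈ homSet A B, Function.Surjective p →
      ∀ g ∈ homSet P B, ∃ h ∈ homSet P A, p ∘ₗ h = g

/-- An endomorphism `f` of `ρ` factors through a projective `Λ_e`-module. -/
def FactorsThroughProjective [NeZero e] (ρ : PreRep R e) (f : ρ.V →ₗ[R] ρ.V) : Prop :=
  ∃ P : PreRep R e, IsProjective P ∧ ∃ g ∈ homSet ρ P, ∃ h ∈ homSet P ρ, f = h ∘ₗ g

/-- "The stable endomorphism ring of `ρ` is isomorphic to the scalars": the identity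
does not factor through a projective, and modulo endomorphisms factoring through
projectives every endomorphism is a scalar multiple of the identity. -/
def StableEndIsoScalars [NeZero e] (ρ : PreRep R e) : Prop :=
  (¬ FactorsThroughProjective ρ LinearMap.id) ∧
  ∀ f ∈ homSet ρ ρ, ∃ c : R, FactorsThroughProjective ρ (f - c • LinearMap.id)

/-- The linear map on `Fin m → W` sending the `src` coordinate to the `dst`
coordinate through `g`, and killing all other coordinates. -/
def mk1 {m : ℕ} {W : Type} [AddCommGroup W] [Module R W] (src dst : Fin m)
    (g : W →ₗ[R] W) : (Fin m → W) →ₗ[R] (Fin m → W) where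
  toFun x := fun r => if r = dst then g (x src) else 0
  map_add' x y := by funext r; by_cases h : r = dst <;> simp [h]
  map_smul' c x := by funext r; by_cases h : r = dst <;> simp [h]

/-- Projection onto the coordinates satisfying `S`. -/
def prj {m : ℕ} {W : Type} [AddCommGroup W] [Module R W] (S : Fin m → Prop)
    [DecidablePred S] : (Fin m → W) →ₗ[R] (Fin m → W) where
  toFun x := fun r => if S r then x r else 0
  map_add' x y := by funext r; by_cases h : S r <;> simp [h]
  map_smul' c x := by funext r; by_cases h : S r <;> simp [h]

/-- Last row index (`e`, 0-based) among `e+1` rows. -/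
def lastRow (e : ℕ) : Fin (e + 1) := ⟨e, Nat.lt_succ_self e⟩

/-- Second-to-last row index (`e-1`, 0-based) among `e+1` rows. -/
def sndRow (e : ℕ) : Fin (e + 1) := ⟨e - 1, by omega⟩

/-- The vertex carrying each of the `e+1` rows: row `r < e-1` sits at vertex `r`,
rows `e-1` and `e` sit at the vertex `e` (0-based index `e-1`). -/
def vrt (e : ℕ) [NeZero e] : Fin (e + 1) → Fin e := fun r =>
  if h : r.val < e - 1 then ⟨r.val, by omega⟩ else ve e


/-- The `n × n` Jordan block with eigenvalue `lam`. -/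
def jordan (R : Type) [CommRing R] (n : ℕ) (lam : R) : Matrix (Fin n) (Fin n) R :=
  Matrix.of fun i j => if i = j then lam else if (j : ℕ) = (i : ℕ) + 1 then 1 else 0

/-- The band module `B(n, lam)`. Rows `0, …, e-2` are the components `k^n` at the
vertices `1, …, e-1`; rows `e-1` and `e` are the two copies of `k^n` at vertex `e`. -/
@[reducible] def band (R : Type) [CommRing R] (e : ℕ) [NeZero e] (n : ℕ) (lam : R) : PreRep R e where
  V := Fin (e + 1) → Fin n → R
  v i := prj fun r => vrt e r = i
  a j :=
    if j.val = e - 1 then mk1 (sndRow e) ⟨0, by omega⟩ LinearMap.id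
    else if j.val = e - 2 then mk1 ⟨e - 2, by omega⟩ (lastRow e) LinearMap.id
    else mk1 ⟨j.val, Nat.lt_succ_of_lt j.isLt⟩ ⟨j.val + 1, Nat.succ_lt_succ j.isLt⟩ LinearMap.id
  d := mk1 (sndRow e) (lastRow e) (Matrix.mulVecLin (jordan R n lam))

/-- The band module `B(1, s)` (with `δ` acting through the scalar `s`); the standard
basis vector `c_i` (`1 ≤ i ≤ e-1`) is the `i-1`-st coordinate, `c_e` the `e-1`-st and
`c_{e+1}` the `e`-th. -/
@[reducible] def band1 (R : Type) [CommRing R] (e : ℕ) [NeZero e] (s : R) : PreRep R e where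
  V := Fin (e + 1) → R
  v i := prj fun r => vrt e r = i
  a j :=
    if j.val = e - 1 then mk1 (sndRow e) ⟨0, by omega⟩ LinearMap.id
    else if j.val = e - 2 then mk1 ⟨e - 2, by omega⟩ (lastRow e) LinearMap.id
    else mk1 ⟨j.val, Nat.lt_succ_of_lt j.isLt⟩ ⟨j.val + 1, Nat.succ_lt_succ j.isLt⟩ LinearMap.id
  d := mk1 (sndRow e) (lastRow e) (s • LinearMap.id)

/-- The projective module `P_e`, with basis `b_{i,1}, b_{i,2}` (row `i-1`) for
`1 ≤ i ≤ e-1` and `b_{e,1}, b_{e,2}` (row `e-1`), `b_{e,3}, b_{e,4}` (row `e`). -/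
@[reducible] def Pe (R : Type) [CommRing R] (e : ℕ) [NeZero e] : PreRep R e where
  V := Fin (e + 1) → Fin 2 → R
  v i := prj fun r => vrt e r = i
  a j :=
    if j.val = e - 1 then mk1 (sndRow e) ⟨0, by omega⟩ LinearMap.id
    else if j.val = e - 2 then
      mk1 ⟨e - 2, by omega⟩ (sndRow e) (Matrix.mulVecLin !![0, 0; 1, 0])
        + mk1 ⟨e - 2, by omega⟩ (lastRow e) (Matrix.mulVecLin !![0, 0; 0, 1])
    else mk1 ⟨j.val, Nat.lt_succ_of_lt j.isLt⟩ ⟨j.val + 1, Nat.succ_lt_succ j.isLt⟩ LinearMap.id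
  d := mk1 (sndRow e) (lastRow e) (Matrix.mulVecLin !![1, 0; 0, 0])
    + mk1 (lastRow e) (lastRow e) (Matrix.mulVecLin !![0, 0; 1, 0])

/-- `Mdef R e τ`: the representation with basis `m_1, …, m_{e+1}` (rows `0, …, e`),
`α_j(m_j) = m_{j+1}` for `j ≤ e-2`, `α_{e-1}(m_{e-1}) = τ · m_{e+1}`,
`α_e(m_e) = m_1`, `δ(m_e) = m_{e+1}`.  For `τ = 0` this is the string module `W`. -/
@[reducible] def Mdef (R : Type) [CommRing R] (e : ℕ) [NeZero e] (t : R) : PreRep R e where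
  V := Fin (e + 1) → R
  v i := prj fun r => vrt e r = i
  a j :=
    if j.val = e - 1 then mk1 (sndRow e) ⟨0, by omega⟩ LinearMap.id
    else if j.val = e - 2 then mk1 ⟨e - 2, by omega⟩ (lastRow e) (t • LinearMap.id)
    else mk1 ⟨j.val, Nat.lt_succ_of_lt j.isLt⟩ ⟨j.val + 1, Nat.succ_lt_succ j.isLt⟩ LinearMap.id
  d := mk1 (sndRow e) (lastRow e) LinearMap.id

/-- The uniserial module `U_{[i,j]}` (with `1 ≤ i ≤ j ≤ e`, 1-based). -/
@[reducible] def U (R : Type) [CommRing R] (e i j : ℕ) : PreRep R e where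
  V := Fin (j + 1 - i) → R
  v t := prj fun r => i - 1 + r.val = t.val
  a t :=
    if h : i ≤ t.val + 1 ∧ t.val + 1 ≤ j - 1 then
      mk1 ⟨t.val + 1 - i, by omega⟩ ⟨t.val + 2 - i, by omega⟩ LinearMap.id
    else 0
  d := 0

/-- The uniserial projective module `P_i` (`i0` is the 0-based index of the vertex),
with basis `p_0, …, p_{2e}` following the cycle of arrows twice around. -/
@[reducible] def Puni (R : Type) [CommRing R] (e : ℕ) [NeZero e] (i0 : ℕ) : PreRep R e where
  V := Fin (2 * e + 1) → R
  v t := prj fun r => (i0 + r.val) % e = t.val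
  a t := ∑ l : Fin (2 * e),
    if (i0 + l.val) % e = t.val then mk1 l.castSucc l.succ LinearMap.id else 0
  d := 0

/-- The simple module `S_e` at the vertex `e`. -/
@[reducible] def Se (R : Type) [CommRing R] (e : ℕ) [NeZero e] : PreRep R e where
  V := R
  v i := if i = ve e then 1 else 0
  a _ := 0
  d := 0

/-- Block upper triangular endomorphism `(x, y) ↦ (f x + θ y, f y)` of `V × V`. -/
def blk {V : Type} [AddCommGroup V] [Module R V] (f th : Module.End R V) :
    Module.End R (V × V) where
  toFun p := (f p.1 + th p.2, f p.2)
  map_add' p q := by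
    simp only [Prod.fst_add, Prod.snd_add, map_add, Prod.mk_add_mk, Prod.mk.injEq, and_true]
    abel
  map_smul' c p := by
    simp only [Prod.smul_fst, Prod.smul_snd, map_smul, Prod.smul_mk, Prod.mk.injEq,
      smul_add, RingHom.id_apply, and_self]

section Ext
variable [NeZero e]

/-- The data of a self-extension of `ρ`: for each generator of `Λ_e`, the
off-diagonal block of its action on `ρ.V × ρ.V`. -/
abbrev Cochain (ρ : PreRep R e) : Type :=
  (Fin e → Module.End R ρ.V) × (Fin e → Module.End R ρ.V) × Module.End R ρ.V

/-- The self-extension of `ρ` determined by the cochain `θ`. -/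
@[reducible] def extRep (ρ : PreRep R e) (th : Cochain ρ) : PreRep R e where
  V := ρ.V × ρ.V
  v i := blk (ρ.v i) (th.1 i)
  a i := blk (ρ.a i) (th.2.1 i)
  d := blk ρ.d th.2.2

/-- `θ` is a cocycle precisely when the corresponding extension is a `Λ_e`-module. -/
def IsCocycle (ρ : PreRep R e) (th : Cochain ρ) : Prop := Satisfies (extRep ρ th)

/-- The coboundary of `φ`; extensions differing by a coboundary are equivalent. -/
def bnd (ρ : PreRep R e) (phi : Module.End R ρ.V) : Cochain ρ :=
  (fun i => ρ.v i * phi - phi * ρ.v i, fun i => ρ.a i * phi - phi * ρ.a i,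
    ρ.d * phi - phi * ρ.d)

/-- `Ext¹_{Λ_e}(ρ, ρ)`, i.e. the space of self-extensions of `ρ` modulo equivalence
(equivalently cocycles modulo coboundaries), is one-dimensional. -/
def ExtSelfOneDimensional (ρ : PreRep R e) : Prop :=
  ∃ th0 : Cochain ρ, IsCocycle ρ th0 ∧ (∀ phi, th0 ≠ bnd ρ phi) ∧
    ∀ th : Cochain ρ, IsCocycle ρ th → ∃ (c : R) (phi : Module.End R ρ.V),
      th = c • th0 + bnd ρ phi

end Ext


/-- The endomorphism algebra of a representation. -/
def endAlg (ρ : PreRep R e) : Subalgebra R (Module.End R ρ.V) where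
  carrier := {f | (∀ i, f * ρ.v i = ρ.v i * f) ∧ (∀ i, f * ρ.a i = ρ.a i * f) ∧
    f * ρ.d = ρ.d * f}
  mul_mem' := by
    rintro f g ⟨hfv, hfa, hfd⟩ ⟨hgv, hga, hgd⟩
    refine ⟨fun i => ?_, fun i => ?_, ?_⟩
    · rw [mul_assoc, hgv i, ← mul_assoc, hfv i, mul_assoc]
    · rw [mul_assoc, hga i, ← mul_assoc, hfa i, mul_assoc]
    · rw [mul_assoc, hgd, ← mul_assoc, hfd, mul_assoc]
  one_mem' := ⟨fun i => by rw [one_mul, mul_one], fun i => by rw [one_mul, mul_one],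
    by rw [one_mul, mul_one]⟩
  add_mem' := by
    rintro f g ⟨hfv, hfa, hfd⟩ ⟨hgv, hga, hgd⟩
    exact ⟨fun i => by rw [add_mul, mul_add, hfv i, hgv i],
      fun i => by rw [add_mul, mul_add, hfa i, hga i],
      by rw [add_mul, mul_add, hfd, hgd]⟩
  zero_mem' := ⟨fun i => by rw [zero_mul, mul_zero], fun i => by rw [zero_mul, mul_zero],
    by rw [zero_mul, mul_zero]⟩
  algebraMap_mem' c :=
    ⟨fun i => Algebra.commutes c (ρ.v i), fun i => Algebra.commutes c (ρ.a i),
      Algebra.commutes c ρ.d⟩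

/-- The endomorphism `τ` of `B(1,λ)` (and of `W`): `c_e ↦ c_{e+1}`, all other
standard basis vectors to `0`. -/
def tau (R : Type) [CommRing R] (e : ℕ) : (Fin (e + 1) → R) →ₗ[R] (Fin (e + 1) → R) :=
  mk1 (sndRow e) (lastRow e) LinearMap.id

/-- The map `r₁ : B(1,λ) → P_e` (with parameter `μ` the coefficient on `b_{e,3}`):
`c_i ↦ b_{i,2}` for `1 ≤ i ≤ e-1`, `c_e ↦ b_{e,2} + μ b_{e,3}`, `c_{e+1} ↦ b_{e,4}`. -/
def r1 (R : Type) [CommRing R] (e : ℕ) (mu : R) :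
    (Fin (e + 1) → R) →ₗ[R] (Fin (e + 1) → Fin 2 → R) where
  toFun x := fun r c => if c = 1 then x r else if r = lastRow e then mu * x (sndRow e) else 0
  map_add' x y := by
    funext r c
    by_cases h : c = 1
    · simp [h]
    · by_cases h2 : r = lastRow e <;> simp [h, h2, mul_add]
  map_smul' t x := by
    funext r c
    by_cases h : c = 1
    · simp [h]
    · by_cases h2 : r = lastRow e <;> simp [h, h2] <;> ring

/-- The map `r₂ : B(1,λ) → P_e`: `c_e ↦ b_{e,4}`, all other basis vectors to `0`. -/
def r2 (R : Type) [CommRing R] (e : ℕ) :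
    (Fin (e + 1) → R) →ₗ[R] (Fin (e + 1) → Fin 2 → R) where
  toFun x := fun r c => if r = lastRow e ∧ c = 1 then x (sndRow e) else 0
  map_add' x y := by
    funext r c
    by_cases h : r = lastRow e ∧ c = 1 <;> simp [h]
  map_smul' t x := by
    funext r c
    by_cases h : r = lastRow e ∧ c = 1 <;> simp [h]

/-- The map `s₁ : P_e → B(1,λ)`: `b_{e,1} ↦ c_e`, `b_{e,2} ↦ c_{e+1}`,
`b_{e,3} ↦ λ c_{e+1}`, `b_{i,1} ↦ c_i`; zero on `b_{e,4}` and the `b_{i,2}`. -/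
def s1 (R : Type) [CommRing R] (e : ℕ) (lam : R) :
    (Fin (e + 1) → Fin 2 → R) →ₗ[R] (Fin (e + 1) → R) where
  toFun y := fun r =>
    if r = lastRow e then y (sndRow e) 1 + lam * y (lastRow e) 0 else y r 0
  map_add' x y := by
    funext r
    by_cases h : r = lastRow e <;> simp [h, mul_add] <;> ring
  map_smul' t x := by
    funext r
    by_cases h : r = lastRow e <;> simp [h] <;> ring

/-- The map `s₂ : P_e → B(1,λ)`: `b_{e,1} ↦ c_{e+1}`, all other basis vectors to `0`. -/
def s2 (R : Type) [CommRing R] (e : ℕ) :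
    (Fin (e + 1) → Fin 2 → R) →ₗ[R] (Fin (e + 1) → R) where
  toFun y := fun r => if r = lastRow e then y (sndRow e) 0 else 0
  map_add' x y := by funext r; by_cases h : r = lastRow e <;> simp [h]
  map_smul' t x := by funext r; by_cases h : r = lastRow e <;> simp [h]

/-- The map `g : W → P_e`, `w_e ↦ b_{e,3}`, `w_{e+1} ↦ b_{e,4}`, `w_j ↦ 0`. -/
def gW (R : Type) [CommRing R] (e : ℕ) :
    (Fin (e + 1) → R) →ₗ[R] (Fin (e + 1) → Fin 2 → R) where
  toFun x := fun r c =>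
    if r = lastRow e then (if c = 0 then x (sndRow e) else x (lastRow e)) else 0
  map_add' x y := by
    funext r c
    by_cases h : r = lastRow e <;> by_cases h2 : c = 0 <;> simp [h, h2]
  map_smul' t x := by
    funext r c
    by_cases h : r = lastRow e <;> by_cases h2 : c = 0 <;> simp [h, h2]

/-- The map `h : P_e → W`, `b_{e,1} ↦ w_e`, `b_{j,1} ↦ w_j`, `b_{e,3} ↦ w_{e+1}`,
zero on `b_{e,2}`, `b_{e,4}` and the `b_{j,2}`. -/
def hW (R : Type) [CommRing R] (e : ℕ) :
    (Fin (e + 1) → Fin 2 → R) →ₗ[R] (Fin (e + 1) → R) where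
  toFun y := fun r => y r 0
  map_add' x y := rfl
  map_smul' t x := rfl



section Band1End

variable {k : Type} [Field k] {e : ℕ} [NeZero e]

lemma mk1_apply {m : ℕ} (src dst : Fin m) (g : k →ₗ[k] k) (x : Fin m → k) (r : Fin m) :
    mk1 (R := k) src dst g x r = if r = dst then g (x src) else 0 := rfl

lemma prj_apply {m : ℕ} (S : Fin m → Prop) [DecidablePred S] (x : Fin m → k) (r : Fin m) :
    prj (R := k) S x r = if S r then x r else 0 := rfl

lemma mk1_id_apply {m : ℕ} (src dst : Fin m) (x : Fin m → k) :
    mk1 (R := k) src dst LinearMap.id x = Pi.single dst (x src) :=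
  funext fun r => by rw [Pi.single_apply]; rfl

lemma tau_apply (x : Fin (e + 1) → k) :
    tau k e x = Pi.single (lastRow e) (x (sndRow e)) :=
  mk1_id_apply _ _ x

lemma snd_ne_last : sndRow e ≠ lastRow e := by
  have := Nat.pos_of_ne_zero (NeZero.ne e)
  simp only [sndRow, lastRow, ne_eq, Fin.mk.injEq]
  omega

lemma vrt_snd : vrt e (sndRow e) = ve e := by
  simp only [vrt]
  rw [dif_neg (show ¬ (sndRow e).val < e - 1 by simp only [sndRow]; omega)]

lemma vrt_last : vrt e (lastRow e) = ve e := by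
  simp only [vrt]
  rw [dif_neg (show ¬ (lastRow e).val < e - 1 by simp only [lastRow]; omega)]

lemma val_lt_of_ne (s : Fin (e + 1)) (h1 : s ≠ sndRow e) (h2 : s ≠ lastRow e) :
    s.val < e - 1 := by
  have hlt := s.isLt
  have he1 : 1 ≤ e := Nat.pos_of_ne_zero (NeZero.ne e)
  rcases Nat.lt_or_ge s.val (e - 1) with h | h
  · exact h
  · exfalso
    rcases Nat.lt_or_ge s.val e with h' | h'
    · exact h1 (Fin.ext (by simp only [sndRow]; omega))
    · exact h2 (Fin.ext (by simp only [lastRow]; omega))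

lemma vrt_ne_of_ne (s : Fin (e + 1)) (h1 : s ≠ sndRow e) (h2 : s ≠ lastRow e) :
    vrt e s ≠ ve e := by
  have hs : s.val < e - 1 := val_lt_of_ne s h1 h2
  simp only [vrt, dif_pos hs, ve, ne_eq, Fin.mk.injEq]
  omega

lemma band1_a_eq (lam : k) (j : Fin e) :
    (band1 k e lam).a j =
      if j.val = e - 1 then mk1 (R := k) (sndRow e) ⟨0, by omega⟩ LinearMap.id
      else if j.val = e - 2 then
        mk1 (R := k) ⟨e - 2, by omega⟩ (lastRow e) LinearMap.id
      else mk1 (R := k) ⟨j.val, Nat.lt_succ_of_lt j.isLt⟩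
        ⟨j.val + 1, Nat.succ_lt_succ j.isLt⟩ LinearMap.id := rfl

lemma tau_mem (he : 2 ≤ e) (lam : k) : tau k e ∈ endAlg (band1 k e lam) := by
  have hcomm : ∀ (src dst : Fin (e + 1)) (g : k →ₗ[k] k), src ≠ lastRow e →
      dst ≠ sndRow e →
      tau k e * mk1 (R := k) src dst g = mk1 (R := k) src dst g * tau k e := by
    intro src dst g hsrc hdst
    refine LinearMap.ext fun x => funext fun r => ?_
    show tau k e (mk1 (R := k) src dst g x) r = mk1 (R := k) src dst g (tau k e x) r
    simp only [tau_apply, mk1_apply]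
    rw [if_neg (fun h => hdst h.symm), Pi.single_eq_of_ne hsrc, map_zero, Pi.single_zero]
    simp
  refine ⟨fun i => ?_, fun j => ?_, ?_⟩
  · refine LinearMap.ext fun x => funext fun r => ?_
    show tau k e (prj (R := k) (fun r => vrt e r = i) x) r
      = prj (R := k) (fun r => vrt e r = i) (tau k e x) r
    simp only [tau_apply, prj_apply]
    by_cases hr : r = lastRow e
    · subst hr
      simp [Pi.single_eq_same, vrt_snd, vrt_last]
    · simp [Pi.single_eq_of_ne hr]
  · show tau k e * (band1 k e lam).a j = (band1 k e lam).a j * tau k e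
    rw [band1_a_eq lam j]
    by_cases hj1 : j.val = e - 1
    · rw [if_pos hj1]
      refine hcomm _ _ _ snd_ne_last ?_
      simp only [sndRow, ne_eq, Fin.mk.injEq]; omega
    · by_cases hj2 : j.val = e - 2
      · rw [if_neg hj1, if_pos hj2]
        refine hcomm _ _ _ ?_ (Ne.symm snd_ne_last)
        simp only [lastRow, ne_eq, Fin.mk.injEq]; omega
      · rw [if_neg hj1, if_neg hj2]
        have hjlt := j.isLt
        refine hcomm _ _ _ ?_ ?_ <;>
          simp only [lastRow, sndRow, ne_eq, Fin.mk.injEq] <;> omega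
  · show tau k e * mk1 (R := k) (sndRow e) (lastRow e) (lam • LinearMap.id)
      = mk1 (R := k) (sndRow e) (lastRow e) (lam • LinearMap.id) * tau k e
    exact hcomm _ _ _ snd_ne_last (Ne.symm snd_ne_last)

lemma tau_sq : tau k e * tau k e = 0 := by
  refine LinearMap.ext fun x => funext fun r => ?_
  show tau k e (tau k e x) r = 0
  simp only [tau_apply]
  rw [Pi.single_eq_of_ne snd_ne_last, Pi.single_zero]
  rfl

lemma endAlg_decomp (he : 2 ≤ e) (lam : k) (f : Module.End k ((band1 k e lam).V))
    (hf : f ∈ endAlg (band1 k e lam)) :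
    f = (f (Pi.single (sndRow e) 1) (sndRow e)) • (1 : Module.End k ((band1 k e lam).V))
      + (f (Pi.single (sndRow e) 1) (lastRow e)) • tau k e := by
  obtain ⟨hv, ha, hd⟩ := hf
  set c1 := f (Pi.single (sndRow e) 1) (sndRow e) with hc1
  set c2 := f (Pi.single (sndRow e) 1) (lastRow e) with hc2
  -- vertex constraint
  have vc : ∀ r s : Fin (e + 1), vrt e s ≠ vrt e r → f (Pi.single r 1) s = 0 := by
    intro r s hne
    have h1 : (band1 k e lam).v (vrt e r) (Pi.single r 1) = Pi.single r 1 := by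
      funext t
      rw [prj_apply, Pi.single_apply]
      by_cases ht : t = r
      · subst ht; simp
      · simp [ht]
    have h2 := LinearMap.congr_fun (hv (vrt e r)) (Pi.single r 1)
    rw [Module.End.mul_apply, Module.End.mul_apply, h1] at h2
    have h3 := congrFun h2 s
    rw [prj_apply, if_neg hne] at h3
    exact h3
  -- generic arrow computation
  have arrow : ∀ (src dst : Fin (e + 1)) (j : Fin e),
      (band1 k e lam).a j = mk1 src dst LinearMap.id →
      f (Pi.single dst 1) = (f (Pi.single src 1) src) • (Pi.single dst 1 : Fin (e + 1) → k) := by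
    intro src dst j hj
    have h2 := LinearMap.congr_fun (ha j) (Pi.single src 1)
    rw [Module.End.mul_apply, Module.End.mul_apply, hj, mk1_id_apply, mk1_id_apply,
      Pi.single_eq_same] at h2
    rw [h2]
    funext t
    rw [Pi.single_apply, Pi.smul_apply, Pi.single_apply]
    split_ifs <;> simp [mul_comm]
  -- the three kinds of arrows
  have haE : (band1 k e lam).a ⟨e - 1, by omega⟩ =
      mk1 (R := k) (sndRow e) ⟨0, by omega⟩ LinearMap.id := by
    rw [band1_a_eq lam, if_pos rfl]
  have haEm : (band1 k e lam).a ⟨e - 2, by omega⟩ =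
      mk1 (R := k) ⟨e - 2, by omega⟩ (lastRow e) LinearMap.id := by
    rw [band1_a_eq lam, if_neg (by simp only; omega), if_pos rfl]
  have haT : ∀ (t : ℕ) (ht : t < e - 2), (band1 k e lam).a ⟨t, by omega⟩ =
      mk1 (R := k) ⟨t, by omega⟩ ⟨t + 1, by omega⟩ LinearMap.id := by
    intro t ht
    rw [band1_a_eq lam, if_neg (by simp only; omega), if_neg (by simp only; omega)]
  -- diagonal chain
  have hbase : f (Pi.single (⟨0, by omega⟩ : Fin (e + 1)) 1) =
      c1 • (Pi.single (⟨0, by omega⟩ : Fin (e + 1)) 1 : Fin (e + 1) → k) :=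
    arrow _ _ _ haE
  have hdiag : ∀ (t : ℕ) (ht : t < e - 1),
      f (Pi.single (⟨t, by omega⟩ : Fin (e + 1)) 1) =
        c1 • (Pi.single (⟨t, by omega⟩ : Fin (e + 1)) 1 : Fin (e + 1) → k) := by
    intro t
    induction t with
    | zero => intro _; exact hbase
    | succ t ih =>
      intro ht
      have ht' : t < e - 2 := by omega
      have := arrow _ _ _ (haT t ht')
      rw [this, ih (by omega), Pi.smul_apply, Pi.single_eq_same, smul_eq_mul, mul_one]
  have hlast : f (Pi.single (lastRow e) 1)
      = c1 • (Pi.single (lastRow e) 1 : Fin (e + 1) → k) := by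
    have := arrow _ _ _ haEm
    rw [this, hdiag (e - 2) (by omega)]
    rw [Pi.smul_apply, Pi.single_eq_same, smul_eq_mul, mul_one]
  have hsnd : f (Pi.single (sndRow e) 1) =
      c1 • (Pi.single (sndRow e) 1 : Fin (e + 1) → k)
        + c2 • (Pi.single (lastRow e) 1 : Fin (e + 1) → k) := by
    funext s
    by_cases h1 : s = sndRow e
    · subst h1
      simp [Pi.single_apply, snd_ne_last, ← hc1]
    · by_cases h2 : s = lastRow e
      · subst h2
        simp [Pi.single_apply, snd_ne_last.symm, ← hc2]
      · rw [vc _ _ (by rw [vrt_snd]; exact vrt_ne_of_ne s h1 h2)]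
        simp [Pi.single_apply, h1, h2]
  -- conclude
  refine LinearMap.pi_ext fun r x => ?_
  have hsingle : (Pi.single r x : Fin (e + 1) → k)
      = x • (Pi.single r 1 : Fin (e + 1) → k) := by
    funext t
    rw [Pi.smul_apply, Pi.single_apply, Pi.single_apply]
    split_ifs <;> simp
  rw [hsingle, map_smul, map_smul]
  congr 1
  have hrhs : (c1 • (1 : Module.End k ((band1 k e lam).V)) + c2 • tau k e)
        (Pi.single r 1)
      = c1 • (Pi.single r 1 : Fin (e + 1) → k) + c2 • tau k e (Pi.single r 1) := rfl
  rw [hrhs, tau_apply]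
  by_cases h1 : r = sndRow e
  · subst h1
    rw [hsnd, Pi.single_eq_same]
  · rw [Pi.single_eq_of_ne (fun h => h1 h.symm) 1, Pi.single_zero, smul_zero, add_zero]
    by_cases h2 : r = lastRow e
    · subst h2
      exact hlast
    · exact hdiag r.val (val_lt_of_ne r h1 h2)

lemma eval_comb (a b : k) :
    ((a • (1 : Module.End k (Fin (e + 1) → k)) + b • tau k e) (Pi.single (sndRow e) 1))
      = fun s => if s = sndRow e then a else if s = lastRow e then b else 0 := by
  funext s
  show a • (Pi.single (sndRow e) 1 : Fin (e + 1) → k) s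
        + b • tau k e (Pi.single (sndRow e) 1) s
      = if s = sndRow e then a else if s = lastRow e then b else 0
  rw [tau_apply, Pi.single_eq_same]
  by_cases hs : s = sndRow e
  · subst hs
    rw [if_pos rfl, Pi.single_eq_same, Pi.single_eq_of_ne snd_ne_last]
    simp
  · rw [if_neg hs, Pi.single_eq_of_ne hs]
    by_cases hs2 : s = lastRow e
    · subst hs2
      rw [if_pos rfl, Pi.single_eq_same]
      simp
    · rw [if_neg hs2, Pi.single_eq_of_ne hs2]
      simp

lemma eval_fst (a b : k) :
    ((a • (1 : Module.End k (Fin (e + 1) → k)) + b • tau k e)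
      (Pi.single (sndRow e) 1)) (sndRow e) = a := by
  rw [eval_comb (k := k)]
  show (if sndRow e = sndRow e then a else if sndRow e = lastRow e then b else 0) = a
  rw [if_pos rfl]

lemma eval_snd (a b : k) :
    ((a • (1 : Module.End k (Fin (e + 1) → k)) + b • tau k e)
      (Pi.single (sndRow e) 1)) (lastRow e) = b := by
  rw [eval_comb (k := k)]
  show (if lastRow e = sndRow e then a else if lastRow e = lastRow e then b else 0) = b
  rw [if_neg snd_ne_last.symm, if_pos rfl]

set_option synthInstance.maxHeartbeats 1000000 in
noncomputable def endAlgEquiv (he : 2 ≤ e) (lam : k) :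
    (endAlg (band1 k e lam)) ≃ₗ[k] (Fin 2 → k) where
  toFun f := fun i =>
    f.1 (Pi.single (sndRow e) 1) (if i = 0 then sndRow e else lastRow e)
  map_add' f g := rfl
  map_smul' c f := rfl
  invFun c := ⟨c 0 • (1 : Module.End k ((band1 k e lam).V)) + c 1 • tau k e,
    add_mem (SMulMemClass.smul_mem _ (one_mem _))
      (SMulMemClass.smul_mem _ (tau_mem he lam))⟩
  left_inv f := Subtype.ext (endAlg_decomp he lam f.1 f.2).symm
  right_inv c := by
    funext i
    fin_cases i
    · exact eval_fst (c 0) (c 1)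
    · exact eval_snd (c 0) (c 1)

lemma one_tau_indep (a b : k) (lam : k)
    (hab : a • (1 : Module.End k ((band1 k e lam).V)) + b • tau k e = 0) :
    a = 0 ∧ b = 0 := by
  have h1 : (a • (1 : Module.End k ((band1 k e lam).V)) + b • tau k e)
      (Pi.single (sndRow e) 1) = 0 := by rw [hab]; rfl
  constructor
  · have := eval_fst (e := e) a b
    rw [h1] at this
    exact this.symm
  · have := eval_snd (e := e) a b
    rw [h1] at this
    exact this.symm

set_option maxHeartbeats 1000000 in
set_option synthInstance.maxHeartbeats 1000000 in
lemma endAlg_iso (he : 2 ≤ e) (lam : k) :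
    Nonempty ((endAlg (band1 k e lam)) ≃ₐ[k]
      (Polynomial k ⧸ Ideal.span {(Polynomial.X : Polynomial k) ^ 2})) := by
  classical
  set A := endAlg (band1 k e lam) with hA
  let T : A := ⟨tau k e, tau_mem he lam⟩
  have hT2 : T * T = 0 := Subtype.ext tau_sq
  let φ : (Polynomial k ⧸ Ideal.span {(Polynomial.X : Polynomial k) ^ 2}) →ₐ[k] A :=
    Ideal.Quotient.liftₐ _ (Polynomial.aeval T) (by
      intro p hp
      rw [Ideal.mem_span_singleton] at hp
      obtain ⟨q, rfl⟩ := hp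
      rw [map_mul, map_pow, Polynomial.aeval_X, pow_two, hT2, zero_mul])
  have hφmk : ∀ p : Polynomial k,
      φ (Ideal.Quotient.mk _ p) = Polynomial.aeval T p := by
    intro p
    show Ideal.Quotient.liftₐ _ (Polynomial.aeval T) _ (Ideal.Quotient.mk _ p) = _
    rw [Ideal.Quotient.liftₐ_apply]
    rfl
  have haeval : ∀ a b : k, Polynomial.aeval T (Polynomial.C a + Polynomial.C b * Polynomial.X)
      = a • (1 : A) + b • T := by
    intro a b
    rw [map_add, map_mul, Polynomial.aeval_X, Polynomial.aeval_C, Polynomial.aeval_C,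
      Algebra.algebraMap_eq_smul_one, Algebra.algebraMap_eq_smul_one, smul_mul_assoc, one_mul]
  have hsurj : Function.Surjective φ := by
    intro g
    obtain hg := endAlg_decomp he lam g.1 g.2
    refine ⟨Ideal.Quotient.mk _ (Polynomial.C (g.1 (Pi.single (sndRow e) 1) (sndRow e))
      + Polynomial.C (g.1 (Pi.single (sndRow e) 1) (lastRow e)) * Polynomial.X), ?_⟩
    rw [hφmk, haeval]
    exact Subtype.ext hg.symm
  have hinj : Function.Injective φ := by
    rw [injective_iff_map_eq_zero]
    intro x hx
    obtain ⟨p, rfl⟩ := Ideal.Quotient.mk_surjective x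
    have hm : (Polynomial.X ^ 2 : Polynomial k).Monic := Polynomial.monic_X_pow 2
    have hrw : (Ideal.Quotient.mk (Ideal.span {(Polynomial.X : Polynomial k) ^ 2}) p)
        = Ideal.Quotient.mk _ (p %ₘ (Polynomial.X ^ 2)) := by
      rw [Ideal.Quotient.mk_eq_mk_iff_sub_mem, Ideal.mem_span_singleton]
      have hdiv := Polynomial.modByMonic_add_div p (Polynomial.X ^ 2)
      exact ⟨p /ₘ (Polynomial.X ^ 2), by linear_combination -hdiv⟩
    rw [hrw] at hx ⊢
    set r := p %ₘ (Polynomial.X ^ 2) with hr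
    have hdeg : r.degree < 2 := by
      have := Polynomial.degree_modByMonic_lt p hm
      rwa [Polynomial.degree_X_pow] at this
    have hdeg1 : r.degree ≤ 1 := by
      by_cases hr0 : r = 0
      · rw [hr0]; simp
      · have h2 := (Polynomial.natDegree_lt_iff_degree_lt (n := 2) hr0).mpr
          (by exact_mod_cast hdeg)
        have h3 : r.natDegree ≤ 1 := by omega
        exact_mod_cast Polynomial.natDegree_le_iff_degree_le.mp h3
    have hre : r = Polynomial.C (r.coeff 0) + Polynomial.C (r.coeff 1) * Polynomial.X := by
      conv_lhs => rw [Polynomial.eq_X_add_C_of_degree_le_one hdeg1]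
      ring
    have h0 : Polynomial.aeval T r = 0 := by
      rw [← hφmk]; exact hx
    rw [hre, haeval] at h0
    have h0' : (r.coeff 0) • (1 : Module.End k ((band1 k e lam).V))
        + (r.coeff 1) • tau k e = 0 := by
      have := congrArg Subtype.val h0
      simpa using this
    obtain ⟨hz0, hz1⟩ := one_tau_indep _ _ lam h0'
    have hr0 : r = 0 := by rw [hre, hz0, hz1]; simp
    rw [hr0, map_zero]
  exact ⟨(AlgEquiv.ofBijective φ ⟨hinj, hsurj⟩).symm⟩

end Band1End

/-- `End_{Λ_e}(B(1,λ))` is two-dimensional over `k`, spanned by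
the identity and `τ`, and is isomorphic as a `k`-algebra to `k[X]/(X²)`. -/
theorem band1_end (k : Type) [Field k] (e : ℕ) (he : 2 ≤ e) [NeZero e]
    (lam : k) (hlam : lam ≠ 0) :
    Module.finrank k (endAlg (band1 k e lam)) = 2 ∧
    (∀ f ∈ endAlg (band1 k e lam), ∃ c₁ c₂ : k,
      f = c₁ • (1 : Module.End k ((band1 k e lam).V))
        + c₂ • (tau k e : Module.End k ((band1 k e lam).V))) ∧
    Nonempty ((endAlg (band1 k e lam)) ≃ₐ[k]
      (Polynomial k ⧸ Ideal.span {(Polynomial.X : Polynomial k) ^ 2})) := by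
  exact ⟨(endAlgEquiv he lam).finrank_eq.trans (Module.finrank_fin_fun k),
    fun f hf => ⟨_, _, endAlg_decomp he lam f hf⟩, endAlg_iso he lam⟩

end GBTA
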